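/- The relative entropy admits the dual variational representation: for probability measures μ, ν on a Polish space X, Ent(μ | ν) = sup over bounded continuous φ : X → ℝ of (∫φ dμ − log ∫e^φ dν). -/

import Mathlib

open MeasureTheory
open scoped ENNReal NNReal

section Aux

lemma clamp_abs_le {c t : ℝ} (hc : 0 ≤ c) : |max (min t c) (-c)| ≤ c := by
  rw [abs_le]
  exact ⟨le_max_right _ _, max_le (min_le_right _ _) (by linarith)⟩

lemma clamp_closer {c t a : ℝ} (ha : |a| ≤ c) : |a - max (min t c) (-c)| ≤ |a - t| := by
  obtain ⟨h1, h2⟩ := abs_le.1 ha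
  rcases le_total t (-c) with h | h
  · rw [min_eq_left (by linarith : t ≤ c), max_eq_right h]
    cases abs_cases (a - t) <;> rw [abs_le] <;> constructor <;> linarith [abs_nonneg (a - t)]
  rcases le_total c t with h' | h'
  · rw [min_eq_right h', max_eq_left (by linarith : -c ≤ c)]
    cases abs_cases (a - t) <;> rw [abs_le] <;> constructor <;> linarith [abs_nonneg (a - t)]
  · rw [min_eq_left h', max_eq_left h]

lemma exp_sub_exp_le {a b c : ℝ} (ha : a ≤ c) (hb : b ≤ c) :
    |Real.exp a - Real.exp b| ≤ Real.exp c * |a - b| := by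
  wlog h : b ≤ a generalizing a b
  · rw [abs_sub_comm, abs_sub_comm a b]; exact this hb ha (le_of_not_ge h)
  rw [abs_of_nonneg (sub_nonneg.2 (Real.exp_le_exp.2 h)), abs_of_nonneg (sub_nonneg.2 h)]
  have h1 : b - a + 1 ≤ Real.exp (b - a) := Real.add_one_le_exp _
  have h2 : Real.exp a * Real.exp (b - a) = Real.exp b := by rw [← Real.exp_add]; ring_nf
  have h3 : Real.exp a ≤ Real.exp c := Real.exp_le_exp.2 ha
  nlinarith [Real.exp_pos a, Real.exp_pos (b - a)]

-- EReal helper lemmas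
lemma ereal_le_of_forall_eps {a : ℝ} {S : EReal}
    (h : ∀ ε : ℝ, 0 < ε → ∃ b : ℝ, a - ε ≤ b ∧ (b : EReal) ≤ S) : (a : EReal) ≤ S := by
  by_contra hc
  push_neg at hc
  induction S using EReal.rec with
  | bot =>
    obtain ⟨b, _, hb⟩ := h 1 one_pos
    exact (EReal.coe_ne_bot b) (le_bot_iff.1 hb)
  | coe s =>
    have hs : s < a := by exact_mod_cast hc
    obtain ⟨b, hb1, hb2⟩ := h ((a - s) / 2) (by linarith)
    have : b ≤ s := by exact_mod_cast hb2
    linarith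
  | top => exact absurd hc (not_lt.2 le_top)

lemma ereal_eq_top_of_forall {S : EReal}
    (h : ∀ M : ℝ, ∃ b : ℝ, M ≤ b ∧ (b : EReal) ≤ S) : S = ⊤ := by
  induction S using EReal.rec with
  | bot =>
    obtain ⟨b, _, hb⟩ := h 0
    exact absurd (le_bot_iff.1 hb) (EReal.coe_ne_bot b)
  | coe s =>
    obtain ⟨b, hb1, hb2⟩ := h (s + 1)
    have : b ≤ s := by exact_mod_cast hb2
    linarith
  | top => rfl

variable {X : Type*} [MeasurableSpace X] [TopologicalSpace X] [PolishSpace X] [BorelSpace X]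

omit [TopologicalSpace X] [PolishSpace X] [BorelSpace X] in
lemma integrable_of_bounded {φ : X → ℝ} {c : ℝ} (hm : Measurable φ) (hb : ∀ x, |φ x| ≤ c)
    (μ : Measure X) [IsFiniteMeasure μ] : Integrable φ μ :=
  (integrable_const c).mono' hm.aestronglyMeasurable (Filter.Eventually.of_forall fun x => by
    simpa using hb x)

/-- Key approximation: any bounded measurable function can be replaced, up to ε in
`L¹(μ)` and `L¹(ν)`, by a bounded continuous function with the same bound. -/
lemma exists_bcf_close {μ ν : Measure X} [IsProbabilityMeasure μ] [IsProbabilityMeasure ν]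
    {φ : X → ℝ} {c : ℝ} (hc : 0 ≤ c) (hm : Measurable φ) (hb : ∀ x, |φ x| ≤ c) {ε : ℝ}
    (hε : 0 < ε) :
    ∃ ψ : BoundedContinuousFunction X ℝ, (∀ x, |ψ x| ≤ c) ∧
      (∫ x, |φ x - ψ x| ∂μ) ≤ ε ∧ (∫ x, |φ x - ψ x| ∂ν) ≤ ε := by
  letI := TopologicalSpace.upgradeIsCompletelyMetrizable X
  have hφi : Integrable φ (μ + ν) := integrable_of_bounded hm hb _
  obtain ⟨g, hg, hgi⟩ := hφi.exists_boundedContinuous_integral_sub_le hε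
  set ψ : BoundedContinuousFunction X ℝ :=
    BoundedContinuousFunction.ofNormedAddCommGroup (fun x => max (min (g x) c) (-c))
      (((map_continuous g).min continuous_const).max continuous_const) c
      (fun x => by simpa using clamp_abs_le (t := g x) hc) with hψdef
  have hψb : ∀ x, |ψ x| ≤ c := fun x => by exact clamp_abs_le (t := g x) hc
  have hpt : ∀ x, |φ x - ψ x| ≤ ‖φ x - g x‖ := fun x => by
    simpa [hψdef, Real.norm_eq_abs] using clamp_closer (t := g x) (hb x)
  -- integrability of |φ - ψ| over μ + ν
  have hmψ : Measurable fun x => |φ x - ψ x| :=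
    (hm.sub (map_continuous ψ).measurable).abs
  have hbψ : ∀ x, |(|φ x - ψ x|)| ≤ 2 * c := fun x => by
    rw [abs_abs]
    calc |φ x - ψ x| ≤ |φ x| + |ψ x| := abs_sub _ _
    _ ≤ 2 * c := by linarith [hb x, hψb x]
  have hiψ : Integrable (fun x => |φ x - ψ x|) (μ + ν) := integrable_of_bounded hmψ hbψ _
  have hgi' : Integrable (fun x => ‖φ x - g x‖) (μ + ν) := (hφi.sub hgi).norm
  have key : (∫ x, |φ x - ψ x| ∂(μ + ν)) ≤ ε :=
    le_trans (integral_mono hiψ hgi' hpt) hg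
  have h2 : ∀ (κ : Measure X), κ ≤ μ + ν → Integrable (fun x => |φ x - ψ x|) κ →
      (∫ x, |φ x - ψ x| ∂κ) ≤ ε := fun κ hκ hint =>
    le_trans (integral_mono_measure hκ (Filter.Eventually.of_forall fun x => abs_nonneg _) hiψ) key
  exact ⟨ψ, hψb, h2 μ (Measure.le_add_right le_rfl) (hiψ.mono_measure (Measure.le_add_right le_rfl)),
    h2 ν (Measure.le_add_left le_rfl) (hiψ.mono_measure (Measure.le_add_left le_rfl))⟩
/-- For any bounded measurable `φ`, the quantity `∫ φ dμ - log ∫ e^φ dν` is at most the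
supremum over bounded continuous functions. -/
lemma coe_D_le_iSup {μ ν : Measure X} [IsProbabilityMeasure μ] [IsProbabilityMeasure ν]
    {φ : X → ℝ} {c : ℝ} (hc : 0 ≤ c) (hm : Measurable φ) (hb : ∀ x, |φ x| ≤ c) :
    ((∫ x, φ x ∂μ - Real.log (∫ x, Real.exp (φ x) ∂ν) : ℝ) : EReal) ≤
      ⨆ ψ : BoundedContinuousFunction X ℝ,
        ((∫ x, ψ x ∂μ - Real.log (∫ x, Real.exp (ψ x) ∂ν) : ℝ) : EReal) := by
  apply ereal_le_of_forall_eps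
  intro ε hε
  set δ : ℝ := ε / (1 + Real.exp (2 * c)) with hδdef
  have hδ : 0 < δ := div_pos hε (by positivity)
  obtain ⟨ψ, hψb, hμc, hνc⟩ := exists_bcf_close hc hm hb hδ (μ := μ) (ν := ν)
  refine ⟨_, ?_, le_iSup (fun ψ : BoundedContinuousFunction X ℝ =>
    ((∫ x, ψ x ∂μ - Real.log (∫ x, Real.exp (ψ x) ∂ν) : ℝ) : EReal)) ψ⟩
  -- now a purely real estimate
  have hmψ : Measurable (ψ : X → ℝ) := (map_continuous ψ).measurable
  have hφi : Integrable φ μ := integrable_of_bounded hm hb μ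
  have hψi : Integrable (ψ : X → ℝ) μ := integrable_of_bounded hmψ hψb μ
  have hiφψ : Integrable (fun x => |φ x - ψ x|) ν := integrable_of_bounded
    ((hm.sub hmψ).abs) (fun x => by
      rw [abs_abs]
      calc |φ x - ψ x| ≤ |φ x| + |ψ x| := abs_sub _ _
      _ ≤ 2 * c := by linarith [hb x, hψb x]) ν
  have heφ : Integrable (fun x => Real.exp (φ x)) ν := integrable_of_bounded
    hm.exp (fun x => by
      rw [abs_of_pos (Real.exp_pos _)]
      exact Real.exp_le_exp.2 (le_of_abs_le (hb x))) ν
  have heψ : Integrable (fun x => Real.exp (ψ x)) ν := integrable_of_bounded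
    hmψ.exp (fun x => by
      rw [abs_of_pos (Real.exp_pos _)]
      exact Real.exp_le_exp.2 (le_of_abs_le (hψb x))) ν
  set A := ∫ x, Real.exp (φ x) ∂ν with hA
  set B := ∫ x, Real.exp (ψ x) ∂ν with hB
  have hexplb : ∀ (g : X → ℝ), (∀ x, |g x| ≤ c) → Integrable (fun x => Real.exp (g x)) ν →
      Real.exp (-c) ≤ ∫ x, Real.exp (g x) ∂ν := by
    intro g hg hgi
    calc Real.exp (-c) = ∫ _, Real.exp (-c) ∂ν := by simp
    _ ≤ ∫ x, Real.exp (g x) ∂ν := integral_mono (integrable_const _) hgi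
        (fun x => Real.exp_le_exp.2 (neg_le_of_abs_le (hg x)))
  have hApos : 0 < A := lt_of_lt_of_le (Real.exp_pos _) (hexplb φ hb heφ)
  have hBpos : 0 < B := lt_of_lt_of_le (Real.exp_pos _) (hexplb ψ hψb heψ)
  have hBlb : Real.exp (-c) ≤ B := hexplb ψ hψb heψ
  -- step 1 : |∫φ - ∫ψ| ≤ δ
  have h1 : |∫ x, φ x ∂μ - ∫ x, ψ x ∂μ| ≤ δ := by
    rw [← integral_sub hφi hψi]
    calc |∫ x, (φ x - ψ x) ∂μ| ≤ ∫ x, |φ x - ψ x| ∂μ := by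
          simpa [Real.norm_eq_abs] using norm_integral_le_integral_norm (fun x => φ x - ψ x) (μ := μ)
    _ ≤ δ := hμc
  -- step 3 : |A - B| ≤ exp c * δ
  have h3 : |A - B| ≤ Real.exp c * δ := by
    rw [hA, hB, ← integral_sub heφ heψ]
    calc |∫ x, (Real.exp (φ x) - Real.exp (ψ x)) ∂ν|
        ≤ ∫ x, |Real.exp (φ x) - Real.exp (ψ x)| ∂ν := by
          simpa [Real.norm_eq_abs] using
            norm_integral_le_integral_norm (fun x => Real.exp (φ x) - Real.exp (ψ x)) (μ := ν)
    _ ≤ ∫ x, Real.exp c * |φ x - ψ x| ∂ν := integral_mono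
        ((heφ.sub heψ).abs)
        (hiφψ.const_mul _)
        (fun x => exp_sub_exp_le (le_of_abs_le (hb x)) (le_of_abs_le (hψb x)))
    _ = Real.exp c * ∫ x, |φ x - ψ x| ∂ν := integral_const_mul _ _
    _ ≤ Real.exp c * δ := by
        exact mul_le_mul_of_nonneg_left hνc (Real.exp_pos c).le
  -- step 4 : log B ≤ log A + exp (2c) * δ
  have hAlb : Real.exp (-c) ≤ A := hexplb φ hb heφ
  have h4 : Real.log B ≤ Real.log A + Real.exp (2 * c) * δ := by
    have hBA : B ≤ A + Real.exp c * δ := by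
      cases abs_cases (A - B) with
      | inl h => linarith [h3, h.1]
      | inr h => linarith [h3, h.1]
    have hfac : A + Real.exp c * δ = A * (1 + Real.exp c * δ / A) := by
      field_simp
    have hlog1 : Real.log B ≤ Real.log (A * (1 + Real.exp c * δ / A)) := by
      rw [← hfac]; exact Real.log_le_log hBpos hBA
    have hpos1 : (0:ℝ) < 1 + Real.exp c * δ / A := by positivity
    rw [Real.log_mul (ne_of_gt hApos) (ne_of_gt hpos1)] at hlog1
    have hlog2 : Real.log (1 + Real.exp c * δ / A) ≤ Real.exp c * δ / A :=
      le_trans (Real.log_le_sub_one_of_pos hpos1) (by ring_nf; exact le_rfl)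
    have hdiv : Real.exp c * δ / A ≤ Real.exp (2 * c) * δ := by
      have h1 : Real.exp c * δ / A ≤ Real.exp c * δ / Real.exp (-c) :=
        div_le_div_of_nonneg_left (by positivity) (Real.exp_pos _) hAlb
      have hcc : c - -c = 2 * c := by ring
      have h2 : Real.exp c * δ / Real.exp (-c) = Real.exp (2 * c) * δ := by
        rw [mul_comm (Real.exp c) δ, mul_div_assoc, ← Real.exp_sub, hcc, mul_comm]
      linarith [h1, h2.le, h2.ge]
    linarith
  -- conclude
  have h1' : ∫ x, φ x ∂μ - δ ≤ ∫ x, ψ x ∂μ := by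
    cases abs_cases (∫ x, φ x ∂μ - ∫ x, ψ x ∂μ) with
    | inl h => linarith [h1, h.1]
    | inr h => linarith [h1, h.1]
  have hδsum : δ + Real.exp (2 * c) * δ = ε := by
    rw [hδdef]; field_simp
  linarith [h1', h4]
omit [TopologicalSpace X] [PolishSpace X] [BorelSpace X] in
/-- The easy (Jensen) direction: each `∫ φ dμ - log ∫ e^φ dν` is at most the entropy. -/
lemma D_le_entropy {μ ν : Measure X} [IsProbabilityMeasure μ] [IsProbabilityMeasure ν]
    (hac : μ ≪ ν) (hInt : Integrable (fun x => Real.log ((μ.rnDeriv ν x).toReal)) μ)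
    {φ : X → ℝ} {c : ℝ} (hm : Measurable φ) (hb : ∀ x, |φ x| ≤ c) :
    ∫ x, φ x ∂μ - Real.log (∫ x, Real.exp (φ x) ∂ν) ≤
      ∫ x, Real.log ((μ.rnDeriv ν x).toReal) ∂μ := by
  set L : X → ℝ := fun x => Real.log ((μ.rnDeriv ν x).toReal) with hL
  have hLm : Measurable L := (Measure.measurable_rnDeriv μ ν).ennreal_toReal.log
  set g : X → ℝ := fun x => φ x - L x with hg
  have hφi : Integrable φ μ := integrable_of_bounded hm hb μ
  have hgi : Integrable g μ := hφi.sub hInt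
  have hgm : Measurable g := hm.sub hLm
  -- key lintegral inequality
  have hlin : ∫⁻ x, ENNReal.ofReal (Real.exp (g x)) ∂μ ≤
      ∫⁻ x, ENNReal.ofReal (Real.exp (φ x)) ∂ν := by
    conv_lhs => rw [← Measure.withDensity_rnDeriv_eq μ ν hac]
    rw [lintegral_withDensity_eq_lintegral_mul _ (Measure.measurable_rnDeriv μ ν)
      (hgm.exp.ennreal_ofReal)]
    apply lintegral_mono_ae
    filter_upwards [Measure.rnDeriv_lt_top μ ν] with x hx
    simp only [Pi.mul_apply]
    rcases eq_or_ne (μ.rnDeriv ν x) 0 with h0 | h0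
    · simp [h0]
    · have ht : 0 < (μ.rnDeriv ν x).toReal := ENNReal.toReal_pos h0 hx.ne
      have he : Real.exp (g x) = Real.exp (φ x) / (μ.rnDeriv ν x).toReal := by
        rw [hg]; simp only
        rw [Real.exp_sub, hL, Real.exp_log ht]
      rw [he, ENNReal.ofReal_div_of_pos ht, ENNReal.ofReal_toReal hx.ne,
        ENNReal.mul_div_cancel h0 hx.ne]
  have hRfin : ∫⁻ x, ENNReal.ofReal (Real.exp (φ x)) ∂ν ≤ ENNReal.ofReal (Real.exp c) := by
    calc ∫⁻ x, ENNReal.ofReal (Real.exp (φ x)) ∂ν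
        ≤ ∫⁻ _, ENNReal.ofReal (Real.exp c) ∂ν := lintegral_mono fun x =>
          ENNReal.ofReal_le_ofReal (Real.exp_le_exp.2 (le_of_abs_le (hb x)))
    _ = ENNReal.ofReal (Real.exp c) := by simp
  have hegi : Integrable (fun x => Real.exp (g x)) μ := by
    refine ⟨hgm.exp.aestronglyMeasurable, ?_⟩
    rw [hasFiniteIntegral_iff_ofReal (Filter.Eventually.of_forall fun x => (Real.exp_pos _).le)]
    exact lt_of_le_of_lt (le_trans hlin hRfin) ENNReal.ofReal_lt_top
  have heφi : Integrable (fun x => Real.exp (φ x)) ν := integrable_of_bounded hm.exp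
    (fun x => by
      rw [abs_of_pos (Real.exp_pos _)]
      exact Real.exp_le_exp.2 (le_of_abs_le (hb x))) ν
  -- Jensen
  have hJ : Real.exp (∫ x, g x ∂μ) ≤ ∫ x, Real.exp (g x) ∂μ := by
    have := convexOn_exp.map_integral_le (Real.continuous_exp.continuousOn) isClosed_univ
      (Filter.Eventually.of_forall fun x => Set.mem_univ (g x)) hgi hegi
    simpa [Function.comp] using this
  -- compare the two integrals
  have hcomp : ∫ x, Real.exp (g x) ∂μ ≤ ∫ x, Real.exp (φ x) ∂ν := by
    rw [integral_eq_lintegral_of_nonneg_ae (Filter.Eventually.of_forall fun x => (Real.exp_pos _).le)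
      hgm.exp.aestronglyMeasurable,
      integral_eq_lintegral_of_nonneg_ae (Filter.Eventually.of_forall fun x => (Real.exp_pos _).le)
      hm.exp.aestronglyMeasurable]
    exact ENNReal.toReal_mono (lt_of_le_of_lt hRfin ENNReal.ofReal_lt_top).ne hlin
  have hApos : 0 < ∫ x, Real.exp (φ x) ∂ν :=
    lt_of_lt_of_le (lt_of_lt_of_le (Real.exp_pos _) hJ) hcomp
  have hfinal : ∫ x, g x ∂μ ≤ Real.log (∫ x, Real.exp (φ x) ∂ν) :=
    (Real.le_log_iff_exp_le hApos).2 (le_trans hJ hcomp)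
  have hsub : ∫ x, g x ∂μ = ∫ x, φ x ∂μ - ∫ x, L x ∂μ := integral_sub hφi hInt
  linarith [hfinal, hsub.le, hsub.ge]
omit [TopologicalSpace X] [PolishSpace X] [BorelSpace X] in
/-- The negative part of `log (dμ/dν)` is always `μ`-integrable when `μ ≪ ν`. -/
lemma integrable_min_log_rnDeriv {μ ν : Measure X} [IsProbabilityMeasure μ]
    [IsProbabilityMeasure ν] (hac : μ ≪ ν) :
    Integrable (fun x => min (Real.log ((μ.rnDeriv ν x).toReal)) 0) μ := by
  set L : X → ℝ := fun x => Real.log ((μ.rnDeriv ν x).toReal) with hL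
  have hLm : Measurable L := (Measure.measurable_rnDeriv μ ν).ennreal_toReal.log
  have hneg : Integrable (fun x => max (-(L x)) 0) μ := by
    have hmmeas : Measurable fun x => max (-(L x)) 0 := hLm.neg.max measurable_const
    refine ⟨hmmeas.aestronglyMeasurable, ?_⟩
    rw [hasFiniteIntegral_iff_ofReal (show ∀ᵐ x ∂μ, 0 ≤ max (-(L x)) 0 from
      Filter.Eventually.of_forall fun x => le_max_right _ _)]
    have hkey : ∫⁻ x, ENNReal.ofReal (max (-(L x)) 0) ∂μ ≤ 1 := by
      conv_lhs => rw [← Measure.withDensity_rnDeriv_eq μ ν hac]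
      rw [lintegral_withDensity_eq_lintegral_mul _ (Measure.measurable_rnDeriv μ ν)
        hmmeas.ennreal_ofReal]
      calc ∫⁻ x, (μ.rnDeriv ν x * ENNReal.ofReal (max (-(L x)) 0)) ∂ν
          ≤ ∫⁻ _, 1 ∂ν := by
            apply lintegral_mono_ae
            filter_upwards [Measure.rnDeriv_lt_top μ ν] with x hx
            rcases eq_or_ne (μ.rnDeriv ν x) 0 with h0 | h0
            · simp [h0]
            have ht : 0 < (μ.rnDeriv ν x).toReal := ENNReal.toReal_pos h0 hx.ne
            set t := (μ.rnDeriv ν x).toReal with htdef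
            rcases le_or_gt 1 t with h1 | h1
            · have : max (-(L x)) 0 = 0 := max_eq_right (by
                simpa [hL] using Real.log_nonneg h1)
              simp [this]
            · have hlog : -(L x) = Real.log t⁻¹ := by rw [hL]; simp [Real.log_inv]; rfl
              have hmax : max (-(L x)) 0 = -(L x) := max_eq_left (by
                rw [hL]; simpa using Real.log_nonpos ht.le h1.le)
              have hbound : t * (-(L x)) ≤ 1 := by
                have h2 : Real.log t⁻¹ ≤ t⁻¹ - 1 := Real.log_le_sub_one_of_pos (by positivity)
                have h3 : t * (t⁻¹ - 1) = 1 - t := by field_simp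
                nlinarith [hlog.le, hlog.ge, ht]
              have hfx : μ.rnDeriv ν x = ENNReal.ofReal t := (ENNReal.ofReal_toReal hx.ne).symm
              rw [hfx, hmax, ← ENNReal.ofReal_mul ht.le]
              calc ENNReal.ofReal (t * (-(L x))) ≤ ENNReal.ofReal 1 :=
                    ENNReal.ofReal_le_ofReal hbound
              _ = 1 := ENNReal.ofReal_one
      _ = 1 := by simp
    exact lt_of_le_of_lt hkey ENNReal.one_lt_top
  have heq : (fun x => min (L x) 0) = fun x => -(max (-(L x)) 0) := by
    funext x
    rcases le_total (L x) 0 with h | h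
    · rw [min_eq_left h, max_eq_left (by linarith), neg_neg]
    · rw [min_eq_right h, max_eq_right (by linarith), neg_zero]
  rw [show (fun x => min (Real.log ((μ.rnDeriv ν x).toReal)) 0) = fun x => min (L x) 0 from rfl,
    heq]
  exact hneg.neg

omit [TopologicalSpace X] [PolishSpace X] [BorelSpace X] in
/-- For each `n`, there is a bounded measurable test function whose `μ`-integral is that of the
truncation of `log (dμ/dν)` at level `n`, while `log ∫ e^ψ dν ≤ e^{-n}`. -/
lemma trunc_test_function {μ ν : Measure X} [IsProbabilityMeasure μ] [IsProbabilityMeasure ν]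
    (hac : μ ≪ ν) (n : ℕ) :
    ∃ ψ : X → ℝ, Measurable ψ ∧ (∀ x, |ψ x| ≤ (n : ℝ)) ∧
      ∫ x, ψ x ∂μ =
        ∫ x, max (min (Real.log ((μ.rnDeriv ν x).toReal)) (n : ℝ)) (-(n : ℝ)) ∂μ ∧
      Real.log (∫ x, Real.exp (ψ x) ∂ν) ≤ Real.exp (-(n : ℝ)) := by
  set L : X → ℝ := fun x => Real.log ((μ.rnDeriv ν x).toReal) with hL
  have hLm : Measurable L := (Measure.measurable_rnDeriv μ ν).ennreal_toReal.log
  have hset : MeasurableSet {x | μ.rnDeriv ν x = 0} :=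
    Measure.measurable_rnDeriv μ ν (measurableSet_singleton 0)
  set ψ : X → ℝ := fun x =>
    if μ.rnDeriv ν x = 0 then -(n : ℝ) else max (min (L x) (n : ℝ)) (-(n : ℝ)) with hψ
  have hψm : Measurable ψ :=
    Measurable.ite hset measurable_const ((hLm.min measurable_const).max measurable_const)
  have hψb : ∀ x, |ψ x| ≤ (n : ℝ) := by
    intro x
    rw [hψ]
    by_cases h : μ.rnDeriv ν x = 0
    · simp [h]
    · simpa [h] using clamp_abs_le (t := min (L x) (n:ℝ)) (c := (n:ℝ)) (Nat.cast_nonneg n)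
  refine ⟨ψ, hψm, hψb, ?_, ?_⟩
  · -- integrals agree since μ-a.e. the density is positive
    apply integral_congr_ae
    filter_upwards [Measure.rnDeriv_pos hac] with x hx
    rw [hψ]
    simp only [if_neg hx.ne']
    rfl
  · -- the exponential moment bound
    have heψi : Integrable (fun x => Real.exp (ψ x)) ν := integrable_of_bounded hψm.exp
      (fun x => by
        rw [abs_of_pos (Real.exp_pos _)]
        exact Real.exp_le_exp.2 (le_of_abs_le (hψb x))) ν
    have hrn : Integrable (fun x => (μ.rnDeriv ν x).toReal + Real.exp (-(n:ℝ))) ν :=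
      (Measure.integrable_toReal_rnDeriv).add (integrable_const _)
    have hptwise : ∀ᵐ x ∂ν, Real.exp (ψ x) ≤ (μ.rnDeriv ν x).toReal + Real.exp (-(n:ℝ)) := by
      filter_upwards [Measure.rnDeriv_lt_top μ ν] with x hx
      rw [hψ]
      by_cases h0 : μ.rnDeriv ν x = 0
      · simp only [if_pos h0]
        exact le_add_of_nonneg_left ENNReal.toReal_nonneg
      · simp only [if_neg h0]
        have ht : 0 < (μ.rnDeriv ν x).toReal := ENNReal.toReal_pos h0 hx.ne
        have h1 : max (min (L x) (n:ℝ)) (-(n:ℝ)) ≤ max (L x) (-(n:ℝ)) :=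
          max_le_max (min_le_left _ _) le_rfl
        calc Real.exp (max (min (L x) (n:ℝ)) (-(n:ℝ)))
            ≤ Real.exp (max (L x) (-(n:ℝ))) := Real.exp_le_exp.2 h1
        _ = max (Real.exp (L x)) (Real.exp (-(n:ℝ))) := Real.exp_monotone.map_max
        _ ≤ (μ.rnDeriv ν x).toReal + Real.exp (-(n:ℝ)) := by
            rw [hL]
            simp only
            rw [Real.exp_log ht]
            exact max_le (le_add_of_nonneg_right (Real.exp_pos _).le)
              (le_add_of_nonneg_left ht.le)
    have hub : ∫ x, Real.exp (ψ x) ∂ν ≤ 1 + Real.exp (-(n:ℝ)) := by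
      calc ∫ x, Real.exp (ψ x) ∂ν ≤ ∫ x, ((μ.rnDeriv ν x).toReal + Real.exp (-(n:ℝ))) ∂ν :=
            integral_mono_ae heψi hrn hptwise
      _ = (∫ x, (μ.rnDeriv ν x).toReal ∂ν) + Real.exp (-(n:ℝ)) := by
            rw [integral_add Measure.integrable_toReal_rnDeriv (integrable_const _)]
            simp
      _ = 1 + Real.exp (-(n:ℝ)) := by
            rw [Measure.integral_toReal_rnDeriv hac]
            simp
    have hlb : 0 < ∫ x, Real.exp (ψ x) ∂ν := by
      have : Real.exp (-(n:ℝ)) ≤ ∫ x, Real.exp (ψ x) ∂ν := by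
        calc Real.exp (-(n:ℝ)) = ∫ _, Real.exp (-(n:ℝ)) ∂ν := by simp
        _ ≤ ∫ x, Real.exp (ψ x) ∂ν := integral_mono (integrable_const _) heψi
            (fun x => Real.exp_le_exp.2 (neg_le_of_abs_le (hψb x)))
      linarith [Real.exp_pos (-(n:ℝ))]
    calc Real.log (∫ x, Real.exp (ψ x) ∂ν) ≤ Real.log (1 + Real.exp (-(n:ℝ))) :=
          Real.log_le_log hlb hub
    _ ≤ Real.exp (-(n:ℝ)) := by
        have := Real.log_le_sub_one_of_pos (show (0:ℝ) < 1 + Real.exp (-(n:ℝ)) by positivity)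
        linarith

omit [TopologicalSpace X] [PolishSpace X] [BorelSpace X] in
lemma exists_trunc_integral_large {μ : Measure X} [IsProbabilityMeasure μ] {L : X → ℝ}
    (hLm : Measurable L) (hmin : Integrable (fun x => min (L x) 0) μ)
    (hni : ¬ Integrable L μ) (M : ℝ) :
    ∃ n : ℕ, M ≤ ∫ x, min (max (L x) 0) (n : ℝ) ∂μ := by
  set P : X → ℝ := fun x => max (L x) 0 with hP
  have hPm : Measurable P := hLm.max measurable_const
  have hP0 : ∀ x, 0 ≤ P x := fun x => le_max_right _ _
  have hPinf : ∫⁻ x, ENNReal.ofReal (P x) ∂μ = ∞ := by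
    by_contra h
    have hPi : Integrable P μ := ⟨hPm.aestronglyMeasurable, by
      rw [hasFiniteIntegral_iff_ofReal (show ∀ᵐ x ∂μ, 0 ≤ P x from
        Filter.Eventually.of_forall hP0)]
      exact lt_top_iff_ne_top.2 h⟩
    have : Integrable L μ := by
      have heq : L = fun x => P x + min (L x) 0 := by
        funext x
        rw [hP]
        simp only
        rw [max_add_min, add_zero]
      rw [heq]
      exact hPi.add hmin
    exact hni this
  have hsup : (⨆ n : ℕ, ∫⁻ x, ENNReal.ofReal (min (P x) (n : ℝ)) ∂μ) = ∞ := by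
    rw [← lintegral_iSup (fun n => (hPm.min measurable_const).ennreal_ofReal)
      (fun m n hmn x => ENNReal.ofReal_le_ofReal
        (min_le_min le_rfl (Nat.cast_le.2 hmn)))]
    rw [← hPinf]
    apply lintegral_congr
    intro x
    apply le_antisymm
    · exact iSup_le fun n => ENNReal.ofReal_le_ofReal (min_le_left _ _)
    · refine le_iSup_of_le ⌈P x⌉₊ (ENNReal.ofReal_le_ofReal ?_)
      rw [min_eq_left (Nat.le_ceil _)]
  set M' : ℝ := max M 0 with hM'
  have hlt : ENNReal.ofReal M' < ⨆ n : ℕ, ∫⁻ x, ENNReal.ofReal (min (P x) (n : ℝ)) ∂μ := by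
    rw [hsup]; exact ENNReal.ofReal_lt_top
  obtain ⟨n, hn⟩ := lt_iSup_iff.1 hlt
  refine ⟨n, ?_⟩
  have hpos : ∀ x, 0 ≤ min (P x) (n : ℝ) := fun x => le_min (hP0 x) (Nat.cast_nonneg n)
  have heq : ∫ x, min (max (L x) 0) (n : ℝ) ∂μ
      = (∫⁻ x, ENNReal.ofReal (min (P x) (n : ℝ)) ∂μ).toReal := by
    rw [integral_eq_lintegral_of_nonneg_ae (Filter.Eventually.of_forall hpos)
      (hPm.min measurable_const).aestronglyMeasurable]
  have hfin : (∫⁻ x, ENNReal.ofReal (min (P x) (n : ℝ)) ∂μ) ≤ ENNReal.ofReal (n : ℝ) := by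
    calc ∫⁻ x, ENNReal.ofReal (min (P x) (n : ℝ)) ∂μ
        ≤ ∫⁻ _, ENNReal.ofReal (n : ℝ) ∂μ := lintegral_mono fun x =>
          ENNReal.ofReal_le_ofReal (min_le_right _ _)
    _ = ENNReal.ofReal (n : ℝ) := by simp
  rw [heq]
  calc M ≤ M' := le_max_left _ _
  _ = (ENNReal.ofReal M').toReal := by rw [ENNReal.toReal_ofReal (le_max_right M 0)]
  _ ≤ (∫⁻ x, ENNReal.ofReal (min (P x) (n : ℝ)) ∂μ).toReal :=
      ENNReal.toReal_mono (lt_of_le_of_lt hfin ENNReal.ofReal_lt_top).ne hn.le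
lemma clamp_abs_le_abs {a n : ℝ} (hn : 0 ≤ n) : |max (min a n) (-n)| ≤ |a| := by
  rcases le_total a 0 with h | h
  · rw [min_eq_left (le_trans h hn), abs_of_nonpos h, abs_of_nonpos (max_le h (by linarith))]
    simp only [neg_le_neg_iff]
    exact le_max_left _ _
  · rw [abs_of_nonneg h, abs_of_nonneg (le_max_of_le_left (le_min h hn))]
    exact max_le (min_le_left _ _) (by linarith)


end Aux

open scoped Classical in
/-- Relative entropy `Ent(μ | ν) = ∫ log(dμ/dν) dμ` if `μ ≪ ν` (with value `+∞` when
`μ` is not absolutely continuous w.r.t. `ν` or the integral diverges). -/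
noncomputable def Ent {X : Type*} [MeasurableSpace X] (μ ν : Measure X) : EReal :=
  if μ ≪ ν ∧ Integrable (fun x => Real.log ((μ.rnDeriv ν x).toReal)) μ
  then ((∫ x, Real.log ((μ.rnDeriv ν x).toReal) ∂μ : ℝ) : EReal)
  else ⊤

/-- Dual variational representation of the relative entropy:
`Ent(μ | ν) = sup_{φ ∈ C_b(X)} { ∫ φ dμ − log ∫ e^φ dν }`. -/
theorem ent_eq_iSup_boundedContinuous {X : Type*} [MeasurableSpace X] [TopologicalSpace X]
    [PolishSpace X] [BorelSpace X] (μ ν : Measure X)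
    [IsProbabilityMeasure μ] [IsProbabilityMeasure ν] :
    Ent μ ν = ⨆ φ : BoundedContinuousFunction X ℝ,
      ((∫ x, φ x ∂μ - Real.log (∫ x, Real.exp (φ x) ∂ν) : ℝ) : EReal) := by
  classical
  set L : X → ℝ := fun x => Real.log ((μ.rnDeriv ν x).toReal) with hL
  have hLm : Measurable L := (Measure.measurable_rnDeriv μ ν).ennreal_toReal.log
  set S : EReal := ⨆ φ : BoundedContinuousFunction X ℝ,
    ((∫ x, φ x ∂μ - Real.log (∫ x, Real.exp (φ x) ∂ν) : ℝ) : EReal) with hS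
  by_cases hcond : μ ≪ ν ∧ Integrable L μ
  · obtain ⟨hac, hInt⟩ := hcond
    rw [Ent, if_pos ⟨hac, hInt⟩]
    apply le_antisymm
    · -- hard direction : entropy ≤ sup
      apply ereal_le_of_forall_eps
      intro ε hε
      -- the clamped integrals converge to ∫ L dμ
      have hconv : Filter.Tendsto
          (fun n : ℕ => ∫ x, max (min (L x) (n : ℝ)) (-(n : ℝ)) ∂μ)
          Filter.atTop (nhds (∫ x, L x ∂μ)) := by
        apply tendsto_integral_of_dominated_convergence (fun x => |L x|)
          (fun n => ((hLm.min measurable_const).max measurable_const).aestronglyMeasurable)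
          hInt.abs
        · intro n
          exact Filter.Eventually.of_forall fun x => by
            simpa [Real.norm_eq_abs] using clamp_abs_le_abs (a := L x) (Nat.cast_nonneg n)
        · apply Filter.Eventually.of_forall
          intro x
          apply tendsto_atTop_of_eventually_const (i₀ := ⌈|L x|⌉₊)
          intro n hn
          have h1 : |L x| ≤ (n : ℝ) := le_trans (Nat.le_ceil _) (Nat.cast_le.2 hn)
          rw [min_eq_left (le_trans (le_abs_self _) h1),
            max_eq_left (le_trans (by linarith [neg_abs_le (L x)]) le_rfl)]
      have hexp0 : Filter.Tendsto (fun n : ℕ => Real.exp (-(n : ℝ)))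
          Filter.atTop (nhds 0) :=
        Real.tendsto_exp_atBot.comp
          (Filter.tendsto_neg_atTop_atBot.comp tendsto_natCast_atTop_atTop)
      have hcomb := hconv.sub hexp0
      rw [sub_zero] at hcomb
      obtain ⟨N, hN⟩ := Metric.tendsto_atTop.1 hcomb ε hε
      have hNd := hN N le_rfl
      rw [Real.dist_eq] at hNd
      obtain ⟨ψ, hψm, hψb, hψint, hψlog⟩ := trunc_test_function hac N
      refine ⟨∫ x, ψ x ∂μ - Real.log (∫ x, Real.exp (ψ x) ∂ν), ?_,
        coe_D_le_iSup (Nat.cast_nonneg N) hψm hψb⟩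
      have habs := abs_lt.1 hNd
      rw [hψint]
      linarith [hψlog, habs.1]
    · -- easy direction : sup ≤ entropy
      rw [hS]
      apply iSup_le
      intro φ
      rw [EReal.coe_le_coe_iff]
      exact D_le_entropy hac hInt (map_continuous φ).measurable
        (fun x => by simpa [Real.norm_eq_abs] using φ.norm_coe_le_norm x)
  · rw [Ent, if_neg hcond]
    symm
    apply ereal_eq_top_of_forall
    intro M
    by_cases hac : μ ≪ ν
    · -- absolutely continuous but log-density not integrable
      have hni : ¬ Integrable L μ := fun h => hcond ⟨hac, h⟩
      have hmin : Integrable (fun x => min (L x) 0) μ := integrable_min_log_rnDeriv hac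
      obtain ⟨n, hn⟩ := exists_trunc_integral_large hLm hmin hni
        (M + 1 - ∫ x, min (L x) 0 ∂μ)
      obtain ⟨ψ, hψm, hψb, hψint, hψlog⟩ := trunc_test_function hac n
      refine ⟨∫ x, ψ x ∂μ - Real.log (∫ x, Real.exp (ψ x) ∂ν), ?_,
        coe_D_le_iSup (Nat.cast_nonneg n) hψm hψb⟩
      -- pointwise: min (max L 0) n + min L 0 ≤ clamp
      have hpt : ∀ x, min (max (L x) 0) (n : ℝ) + min (L x) 0 ≤
          max (min (L x) (n : ℝ)) (-(n : ℝ)) := by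
        intro x
        rcases le_total (L x) 0 with h | h
        · rw [max_eq_right h, min_eq_left (Nat.cast_nonneg n), min_eq_left h, zero_add,
            min_eq_left (le_trans h (Nat.cast_nonneg n))]
          exact le_max_left _ _
        · rw [max_eq_left h, min_eq_right h, add_zero]
          exact le_max_of_le_left le_rfl
      have hGi : Integrable (fun x => min (max (L x) 0) (n : ℝ)) μ :=
        integrable_of_bounded ((hLm.max measurable_const).min measurable_const)
          (fun x => by
            rw [abs_of_nonneg (le_min (le_max_right _ _) (Nat.cast_nonneg n))]
            exact min_le_right _ _) μ
      have hCi : Integrable (fun x => max (min (L x) (n : ℝ)) (-(n : ℝ))) μ :=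
        integrable_of_bounded ((hLm.min measurable_const).max measurable_const)
          (fun x => clamp_abs_le (Nat.cast_nonneg n)) μ
      have hint : M + 1 ≤ ∫ x, max (min (L x) (n : ℝ)) (-(n : ℝ)) ∂μ := by
        have h1 : ∫ x, (min (max (L x) 0) (n : ℝ) + min (L x) 0) ∂μ ≤
            ∫ x, max (min (L x) (n : ℝ)) (-(n : ℝ)) ∂μ :=
          integral_mono (hGi.add hmin) hCi hpt
        rw [integral_add hGi hmin] at h1
        linarith
      have hexple : Real.exp (-(n:ℝ)) ≤ 1 := by
        calc Real.exp (-(n:ℝ)) ≤ Real.exp 0 := Real.exp_le_exp.2 (by simp)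
        _ = 1 := Real.exp_zero
      rw [hψint]
      linarith [hψlog]
    · -- not absolutely continuous
      rw [Measure.AbsolutelyContinuous] at hac
      push_neg at hac
      obtain ⟨s, hs0, hsne⟩ := hac
      set t := toMeasurable ν s with ht'
      have ht : MeasurableSet t := measurableSet_toMeasurable ν s
      have hνt : ν t = 0 := by rw [ht', measure_toMeasurable]; exact hs0
      have hμt : μ t ≠ 0 := fun h => hsne (measure_mono_null (subset_toMeasurable ν s) h)
      set p : ℝ := (μ t).toReal with hp'
      have hp : 0 < p := ENNReal.toReal_pos hμt (measure_ne_top μ t)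
      obtain ⟨n, hn⟩ := exists_nat_gt (M / p)
      set φ : X → ℝ := t.indicator fun _ => (n : ℝ) with hφ'
      have hφm : Measurable φ := measurable_const.indicator ht
      have hφb : ∀ x, |φ x| ≤ (n : ℝ) := by
        intro x
        by_cases hx : x ∈ t
        · rw [hφ', Set.indicator_of_mem hx, abs_of_nonneg (Nat.cast_nonneg n)]
        · rw [hφ', Set.indicator_of_notMem hx, abs_zero]
          exact Nat.cast_nonneg n
      refine ⟨∫ x, φ x ∂μ - Real.log (∫ x, Real.exp (φ x) ∂ν), ?_,
        coe_D_le_iSup (Nat.cast_nonneg n) hφm hφb⟩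
      have hIμ : ∫ x, φ x ∂μ = p * n := by
        rw [hφ', integral_indicator_const _ ht, smul_eq_mul]
        rfl
      have hIν : ∫ x, Real.exp (φ x) ∂ν = 1 := by
        have : (fun x => Real.exp (φ x)) =ᵐ[ν] fun _ => 1 := by
          filter_upwards [measure_eq_zero_iff_ae_notMem.1 hνt] with x hx
          rw [hφ', Set.indicator_of_notMem hx, Real.exp_zero]
        rw [integral_congr_ae this]
        simp
      rw [hIμ, hIν, Real.log_one, sub_zero]
      have := (div_lt_iff₀ hp).1 hn
      nlinarith
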